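/- In the completed one-mode full Fock space F̄(ℂ) = ℓ²(ℕ₀) with orthonormal basis (e_n)_{n≥0}, the exponential vectors ε(z) := Σ_{n≥0} (z^n/√(n!)) e_n for z ∈ ℂ form a linearly independent family. Consequently, for H := span{ε(z) : z ≠ 0}, the orthogonal projection Ω Ω* onto ℂe_0, restricted to H, does not map H into H (it is a weak projection on H that is not a projection of H). -/

import Mathlib

open scoped InnerProductSpace


lemma expVec_summable {F : Type*} [NormedAddCommGroup F] [InnerProductSpace ℂ F]
    [CompleteSpace F] (b : HilbertBasis ℕ ℂ F) (z : ℂ) :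
    Summable (fun n : ℕ => (z ^ n / (Real.sqrt (Nat.factorial n) : ℂ)) • b n) := by
  have hb : ∀ m : ℕ, ‖b m‖ = 1 := fun m => b.orthonormal.1 m
  have hfac : ∀ m : ℕ, (0:ℝ) < Real.sqrt (Nat.factorial m) :=
    fun m => Real.sqrt_pos.2 (by exact_mod_cast Nat.factorial_pos m)
  have hnorm : ∀ m : ℕ, ‖(z ^ m / (Real.sqrt (Nat.factorial m) : ℂ)) • b m‖
      = ‖z‖ ^ m / Real.sqrt (Nat.factorial m) := by
    intro m
    rw [norm_smul, hb, mul_one, norm_div, norm_pow,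
      Complex.norm_real, Real.norm_eq_abs, abs_of_pos (hfac m)]
  apply Summable.of_norm
  apply summable_of_ratio_norm_eventually_le (r := 1/2) (by norm_num)
  obtain ⟨N, hN⟩ := exists_nat_gt ((2 * ‖z‖) ^ 2)
  filter_upwards [Filter.eventually_ge_atTop N] with n hn
  rw [norm_norm, norm_norm, hnorm, hnorm, pow_succ, Nat.factorial_succ, Nat.cast_mul,
    Real.sqrt_mul (by positivity), div_le_iff₀ (by positivity)]
  have key : 2 * ‖z‖ ≤ Real.sqrt ((n:ℝ) + 1) := by
    rw [show (2 : ℝ) * ‖z‖ = Real.sqrt ((2 * ‖z‖)^2) by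
      rw [Real.sqrt_sq (by positivity)]]
    apply Real.sqrt_le_sqrt
    calc (2 * ‖z‖) ^ 2 ≤ N := le_of_lt hN
      _ ≤ (n : ℝ) + 1 := by exact_mod_cast le_trans hn (Nat.le_succ n)
  have h2 : 1/2 * (‖z‖ ^ n / Real.sqrt (Nat.factorial n))
      * (Real.sqrt (((n:ℕ):ℝ)+1) * Real.sqrt (Nat.factorial n))
      = 1/2 * ‖z‖ ^ n * Real.sqrt (((n:ℕ):ℝ)+1) := by
    field_simp
  push_cast
  push_cast at h2
  rw [h2]
  nlinarith [key, pow_nonneg (norm_nonneg z) n, norm_nonneg z,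
    Real.sqrt_nonneg ((n:ℝ)+1)]
lemma expVec_coord {F : Type*} [NormedAddCommGroup F] [InnerProductSpace ℂ F]
    [CompleteSpace F] (b : HilbertBasis ℕ ℂ F) (z : ℂ) (m : ℕ) :
    ⟪b m, ∑' n : ℕ, (z ^ n / (Real.sqrt (Nat.factorial n) : ℂ)) • b n⟫_ℂ
      = z ^ m / (Real.sqrt (Nat.factorial m) : ℂ) := by
  have h := (innerSL ℂ (b m)).map_tsum (expVec_summable b z)
  simp only [innerSL_apply_apply] at h
  rw [h]
  have horth := b.orthonormal
  rw [orthonormal_iff_ite] at horth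
  have : ∀ n : ℕ, ⟪b m, (z ^ n / (Real.sqrt (Nat.factorial n) : ℂ)) • b n⟫_ℂ
      = if n = m then z ^ m / (Real.sqrt (Nat.factorial m) : ℂ) else 0 := by
    intro n
    rw [inner_smul_right, horth]
    by_cases hnm : n = m
    · simp [hnm]
    · simp [hnm, Ne.symm hnm]
  rw [tsum_congr this, tsum_ite_eq]
/-- In the completed one-mode full Fock space (a Hilbert space `F`
with Hilbert basis `(e_n)_{n ∈ ℕ}`), the exponential vectors
`ε(z) = ∑ₙ (zⁿ/√(n!)) eₙ` form a linearly independent family.  Consequently, for the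
(dense pre-Hilbert) subspace `H := span{ε(z) : z ≠ 0}`, the rank-one projection
`Ω Ω* : x ↦ ⟪Ω, x⟫ Ω` onto `ℂΩ` (where `Ω = e₀ = ε(0)`) does not map `H` into `H`;
it is a weak projection on `H` that is not a projection of `H`. -/
theorem expVec_linearIndependent_and_vacuum_proj_not_invariant
    {F : Type*} [NormedAddCommGroup F] [InnerProductSpace ℂ F] [CompleteSpace F]
    (b : HilbertBasis ℕ ℂ F)
    (ε : ℂ → F)
    (hε : ∀ z : ℂ, ε z = ∑' n : ℕ, (z ^ n / (Real.sqrt (Nat.factorial n) : ℂ)) • b n) :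
    LinearIndependent ℂ ε ∧
    ∃ x ∈ Submodule.span ℂ (ε '' {z : ℂ | z ≠ 0}),
      ⟪b 0, x⟫_ℂ • b 0 ∉ Submodule.span ℂ (ε '' {z : ℂ | z ≠ 0}) := by
  have hsqrt : ∀ n : ℕ, ((Real.sqrt (Nat.factorial n) : ℝ) : ℂ) ≠ 0 := by
    intro n
    rw [Complex.ofReal_ne_zero]
    exact ne_of_gt (Real.sqrt_pos.2 (by exact_mod_cast Nat.factorial_pos n))
  have hcoord : ∀ (z : ℂ) (m : ℕ),
      ⟪b m, ε z⟫_ℂ = z ^ m / (Real.sqrt (Nat.factorial m) : ℂ) := by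
    intro z m
    rw [hε z]
    exact expVec_coord b z m
  -- the linear map extracting (rescaled) coordinates
  let T : F →ₗ[ℂ] (ℕ → ℂ) :=
    { toFun := fun x n => ((Real.sqrt (Nat.factorial n) : ℝ) : ℂ) * ⟪b n, x⟫_ℂ
      map_add' := by intro x y; funext n; simp only [inner_add_right, Pi.add_apply]; ring
      map_smul' := by intro c x; funext n; simp only [inner_smul_right, Pi.smul_apply, smul_eq_mul, RingHom.id_apply]; ring }
  have hpow : LinearIndependent ℂ (fun z : ℂ => fun n : ℕ => z ^ n) := by
    exact (linearIndependent_monoidHom (Multiplicative ℕ) ℂ).comp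
      (fun z : ℂ => powersHom ℂ z) (fun x y h => by
        simpa using DFunLike.congr_fun h (Multiplicative.ofAdd 1))
  have hTε : (⇑T) ∘ ε = fun z : ℂ => fun n : ℕ => z ^ n := by
    funext z n
    show ((Real.sqrt (Nat.factorial n) : ℝ) : ℂ) * ⟪b n, ε z⟫_ℂ = z ^ n
    rw [hcoord z n, mul_div_cancel₀ _ (hsqrt n)]
  have hli : LinearIndependent ℂ ε := by
    apply LinearIndependent.of_comp T
    rw [hTε]
    exact hpow
  refine ⟨hli, ε 1, Submodule.subset_span ⟨1, one_ne_zero, rfl⟩, ?_⟩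
  have h1 : ⟪b 0, ε 1⟫_ℂ = 1 := by
    rw [hcoord 1 0]
    simp
  have h0 : ε 0 = b 0 := by
    rw [hε 0]
    rw [tsum_eq_single 0 (by intro n hn; simp [zero_pow hn])]
    simp
  rw [h1, one_smul, ← h0]
  exact hli.notMem_span_image (by simp)
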